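/- Let K : ℕ → ℤ be the sequence of Kontsevich numbers, defined by K(1) = 1 and, for d ≥ 2, K(d) = Σ_{d₁+d₂=d, d₁≥1, d₂≥1} K(d₁)·K(d₂)·( d₁²·d₂²·C(3d−4, 3d₁−2) − d₁³·d₂·C(3d−4, 3d₁−1) ). Then there exists a constant C > 0 such that for all n ≥ 1, |log K(n) − 3·n·log n| ≤ C·n; in other words, log K(n) = 3·n·log n + O(n) as n → ∞. -/

import Mathlib

open Finset

/-- the symmetrized bracket. -/
def Br (d a : ℕ) : ℤ :=
  2*(a:ℤ)*((d-a : ℕ):ℤ)*((3*d-4).choose (3*a-2) : ℤ)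
    - (a:ℤ)^2*((3*d-4).choose (3*a-1) : ℤ)
    - ((d-a : ℕ):ℤ)^2*((3*d-4).choose (3*a-3) : ℤ)

lemma choose_id (a b : ℕ) (ha : 1 ≤ a) (hb : 1 ≤ b) :
    ((3*a-1 : ℕ) : ℤ) * ((3*b-1 : ℕ) : ℤ) *
      (2*(a:ℤ)*(b:ℤ)*((3*(a+b)-4).choose (3*a-2) : ℤ)
        - (a:ℤ)^2*((3*(a+b)-4).choose (3*a-1) : ℤ)
        - (b:ℤ)^2*((3*(a+b)-4).choose (3*a-3) : ℤ))
    = ((3*(a+b)-4).choose (3*a-2) : ℤ) *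
        (3*(a:ℤ)*(b:ℤ)*((a:ℤ)+(b:ℤ)+2) - 2*((a:ℤ)+(b:ℤ))^2) := by
  obtain ⟨a₁, rfl⟩ : ∃ a₁, a = a₁ + 1 := ⟨a - 1, by omega⟩
  obtain ⟨b₁, rfl⟩ : ∃ b₁, b = b₁ + 1 := ⟨b - 1, by omega⟩
  have e1 : 3*(a₁+1) - 1 = 3*a₁ + 2 := by omega
  have e2 : 3*(b₁+1) - 1 = 3*b₁ + 2 := by omega
  have e3 : 3*((a₁+1)+(b₁+1)) - 4 = 3*a₁ + 3*b₁ + 2 := by omega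
  have e4 : 3*(a₁+1) - 2 = 3*a₁ + 1 := by omega
  have e5 : 3*(a₁+1) - 3 = 3*a₁ := by omega
  rw [e1, e2, e3, e4, e5]
  set m := 3*a₁ + 3*b₁ + 2 with hm
  have h1 := Nat.choose_succ_right_eq m (3*a₁+1)
  have h2 := Nat.choose_succ_right_eq m (3*a₁)
  have hm1 : m - (3*a₁+1) = 3*b₁ + 1 := by omega
  have hm2 : m - 3*a₁ = 3*b₁ + 2 := by omega
  rw [hm1] at h1
  rw [hm2] at h2
  have h1' : ((m.choose (3*a₁+1+1)) : ℤ) * (3*(a₁:ℤ)+2) = (m.choose (3*a₁+1) : ℤ) * (3*(b₁:ℤ)+1) := by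
    exact_mod_cast congrArg (Nat.cast : ℕ → ℤ) h1
  have h2' : ((m.choose (3*a₁+1)) : ℤ) * (3*(a₁:ℤ)+1) = (m.choose (3*a₁) : ℤ) * (3*(b₁:ℤ)+2) := by
    exact_mod_cast congrArg (Nat.cast : ℕ → ℤ) h2
  have e6 : 3*a₁ + 1 + 1 = 3*a₁ + 2 := by omega
  rw [e6] at h1'
  push_cast
  linear_combination (-(((a₁:ℤ)+1)^2) * (3*(b₁:ℤ)+2)) * h1' + ((((b₁:ℤ)+1)^2) * (3*(a₁:ℤ)+2)) * h2'

/-- identity form of `Br`. -/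
lemma Br_id (d a : ℕ) (ha : 0 < a) (had : a < d) :
    ((3*a-1 : ℕ) : ℤ) * ((3*(d-a)-1 : ℕ) : ℤ) * Br d a
      = ((3*d-4).choose (3*a-2) : ℤ) *
        (3*(a:ℤ)*((d-a:ℕ):ℤ)*((d:ℤ)+2) - 2*(d:ℤ)^2) := by
  have hab : a + (d - a) = d := by omega
  have h := choose_id a (d - a) (by omega) (by omega)
  rw [hab] at h
  have hc : ((d - a : ℕ) : ℤ) = (d : ℤ) - (a : ℤ) := by
    push_cast [Nat.cast_sub (le_of_lt had)]; ring
  rw [Br]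
  rw [h]
  rw [hc]; ring

lemma T_lb (d a : ℕ) (hd : 2 ≤ d) (ha : 0 < a) (had : a < d) :
    ((d:ℤ)^2 + 3*(d:ℤ) - 6) ≤ 3*(a:ℤ)*((d-a:ℕ):ℤ)*((d:ℤ)+2) - 2*(d:ℤ)^2 := by
  have hc : ((d - a : ℕ) : ℤ) = (d : ℤ) - (a : ℤ) := by
    push_cast [Nat.cast_sub (le_of_lt had)]; ring
  rw [hc]
  have h1 : (1:ℤ) ≤ (a:ℤ) := by exact_mod_cast ha
  have h2 : (a:ℤ) ≤ (d:ℤ) - 1 := by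
    have : (a:ℤ) + 1 ≤ (d:ℤ) := by exact_mod_cast had
    linarith
  have h3 : (2:ℤ) ≤ (d:ℤ) := by exact_mod_cast hd
  nlinarith [mul_nonneg (sub_nonneg.2 h1) (sub_nonneg.2 (by linarith : (1:ℤ) ≤ (d:ℤ) - (a:ℤ)))]

lemma choose_pos' (d a : ℕ) (hd : 2 ≤ d) (ha : 0 < a) (had : a < d) :
    0 < (((3*d-4).choose (3*a-2)) : ℤ) := by
  have : 3*a - 2 ≤ 3*d - 4 := by omega
  exact_mod_cast Nat.choose_pos this

lemma Br_pos (d a : ℕ) (hd : 2 ≤ d) (ha : 0 < a) (had : a < d) : 0 < Br d a := by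
  have h := Br_id d a ha had
  have hT := T_lb d a hd ha had
  have hC := choose_pos' d a hd ha had
  have hd' : (2:ℤ) ≤ (d:ℤ) := by exact_mod_cast hd
  have hR : 0 < ((3*d-4).choose (3*a-2) : ℤ) *
      (3*(a:ℤ)*((d-a:ℕ):ℤ)*((d:ℤ)+2) - 2*(d:ℤ)^2) := by
    apply mul_pos hC
    nlinarith
  rw [← h] at hR
  have h1 : (0:ℤ) < ((3*a-1 : ℕ) : ℤ) := by
    have : 0 < 3*a - 1 := by omega
    exact_mod_cast this
  have h2 : (0:ℤ) < ((3*(d-a)-1 : ℕ) : ℤ) := by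
    have : 0 < 3*(d-a) - 1 := by omega
    exact_mod_cast this
  by_contra hle
  push_neg at hle
  have : ((3*a-1 : ℕ) : ℤ) * ((3*(d-a)-1 : ℕ) : ℤ) * Br d a ≤ 0 :=
    mul_nonpos_of_nonneg_of_nonpos (le_of_lt (mul_pos h1 h2)) hle
  linarith

lemma Br_le (d a : ℕ) (hd : 2 ≤ d) (ha : 0 < a) (had : a < d) :
    Br d a ≤ 2*(d:ℤ)*((3*d-4).choose (3*a-2) : ℤ) := by
  have h := Br_id d a ha had
  have hC := choose_pos' d a hd ha had
  have hBr := Br_pos d a hd ha had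
  have ha' : (1:ℤ) ≤ (a:ℤ) := by exact_mod_cast ha
  have hb' : (1:ℤ) ≤ ((d-a:ℕ):ℤ) := by
    have : 1 ≤ d - a := by omega
    exact_mod_cast this
  have hd' : (2:ℤ) ≤ (d:ℤ) := by exact_mod_cast hd
  -- (3a-1)(3b-1) ≥ 4ab and T ≤ 8abd
  have h1 : (2*(a:ℤ)) ≤ ((3*a-1 : ℕ) : ℤ) := by
    have : ((3*a-1 : ℕ) : ℤ) = 3*(a:ℤ) - 1 := by
      have : 1 ≤ 3*a := by omega
      push_cast [Nat.cast_sub this]; ring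
    rw [this]; linarith
  have h2 : (2*((d-a:ℕ):ℤ)) ≤ ((3*(d-a)-1 : ℕ) : ℤ) := by
    have e : ((3*(d-a)-1 : ℕ) : ℤ) = 3*((d-a:ℕ):ℤ) - 1 := by
      have : 1 ≤ 3*(d-a) := by omega
      push_cast [Nat.cast_sub this]; ring
    rw [e]; linarith
  -- key chain: 4ab * Br ≤ (3a-1)(3b-1) Br = C*T ≤ C*8abd
  have hchain : 4*(a:ℤ)*((d-a:ℕ):ℤ) * Br d a ≤
      ((3*d-4).choose (3*a-2) : ℤ) * (8*(a:ℤ)*((d-a:ℕ):ℤ)*(d:ℤ)) := by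
    have hle1 : 4*(a:ℤ)*((d-a:ℕ):ℤ) * Br d a ≤
        ((3*a-1 : ℕ) : ℤ) * ((3*(d-a)-1 : ℕ) : ℤ) * Br d a := by
      have : 4*(a:ℤ)*((d-a:ℕ):ℤ) ≤ ((3*a-1 : ℕ) : ℤ) * ((3*(d-a)-1 : ℕ) : ℤ) := by
        nlinarith
      exact mul_le_mul_of_nonneg_right this (le_of_lt hBr)
    rw [h] at hle1
    refine hle1.trans ?_
    have hTle : 3*(a:ℤ)*((d-a:ℕ):ℤ)*((d:ℤ)+2) - 2*(d:ℤ)^2 ≤ 8*(a:ℤ)*((d-a:ℕ):ℤ)*(d:ℤ) := by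
      have hab0 : (0:ℤ) ≤ (a:ℤ)*((d-a:ℕ):ℤ) - 1 := by nlinarith
      have h5d : (0:ℤ) ≤ 5*(d:ℤ) - 6 := by linarith
      nlinarith [mul_nonneg hab0 h5d]
    exact mul_le_mul_of_nonneg_left hTle (le_of_lt hC)
  have hab : (0:ℤ) < 4*(a:ℤ)*((d-a:ℕ):ℤ) := by positivity
  have : 4*(a:ℤ)*((d-a:ℕ):ℤ) * Br d a ≤ 4*(a:ℤ)*((d-a:ℕ):ℤ) * (2*(d:ℤ)*((3*d-4).choose (3*a-2) : ℤ)) := by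
    calc 4*(a:ℤ)*((d-a:ℕ):ℤ) * Br d a ≤ ((3*d-4).choose (3*a-2) : ℤ) * (8*(a:ℤ)*((d-a:ℕ):ℤ)*(d:ℤ)) := hchain
    _ = 4*(a:ℤ)*((d-a:ℕ):ℤ) * (2*(d:ℤ)*((3*d-4).choose (3*a-2) : ℤ)) := by ring
  exact le_of_mul_le_mul_left this hab

lemma two_Br_one (d : ℕ) (hd : 2 ≤ d) :
    2 * Br d 1 = (d:ℤ)^2 + 3*(d:ℤ) - 6 := by
  have h := Br_id d 1 (by omega) (by omega)
  have e1 : (3*1-1 : ℕ) = 2 := by norm_num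
  have e2 : 3*d-4 ≥ 1 := by omega
  have e3 : ((3*(d-1)-1 : ℕ) : ℤ) = 3*(d:ℤ) - 4 := by
    have : 3*(d-1)-1 = 3*d - 4 := by omega
    rw [this]
    push_cast [Nat.cast_sub (by omega : 4 ≤ 3*d)]; ring
  have e4 : (3*1-2 : ℕ) = 1 := by norm_num
  rw [e1, e3, e4, Nat.choose_one_right] at h
  have hd4 : (0:ℤ) < 3*(d:ℤ) - 4 := by
    have : (2:ℤ) ≤ (d:ℤ) := by exact_mod_cast hd
    linarith
  have e5 : ((3*d-4 : ℕ) : ℤ) = 3*(d:ℤ) - 4 := by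
    push_cast [Nat.cast_sub (by omega : 4 ≤ 3*d)]; ring
  rw [e5] at h
  have e6 : ((d-1:ℕ):ℤ) = (d:ℤ) - 1 := by
    push_cast [Nat.cast_sub (by omega : 1 ≤ d)]; ring
  rw [e6] at h
  -- h : 2 * (3d-4) * Br d 1 = (3d-4) * (3*1*(d-1)*(d+2) - 2d²)
  have key : (3*(d:ℤ) - 4) * (2 * Br d 1) = (3*(d:ℤ) - 4) * ((d:ℤ)^2 + 3*(d:ℤ) - 6) := by
    have : (3:ℤ)*(1:ℕ)*((d:ℤ)-1)*((d:ℤ)+2) - 2*(d:ℤ)^2 = (d:ℤ)^2 + 3*(d:ℤ) - 6 := by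
      push_cast; ring
    rw [this] at h
    linear_combination h
  exact mul_left_cancel₀ (ne_of_gt hd4) key

lemma sum_rev' {M : Type*} [AddCommMonoid M] (d : ℕ) (f : ℕ → M) :
    ∑ a ∈ Finset.Ioo 0 d, f a = ∑ a ∈ Finset.Ioo 0 d, f (d - a) := by
  refine Finset.sum_nbij' (fun a => d - a) (fun a => d - a)
    (fun a ha => ?_) (fun a ha => ?_) (fun a ha => ?_) (fun a ha => ?_) (fun a ha => ?_) <;>
    simp only [Finset.mem_Ioo] at *
  · omega
  · omega
  · omega
  · omega
  · congr 1; omega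

lemma sum_rev'' {M : Type*} [AddCommMonoid M] (d : ℕ) (f : ℕ → M) :
    ∑ a ∈ Finset.Ioo 0 d, f a = ∑ a ∈ Finset.Ioo 0 d, f (d - a) := by
  refine Finset.sum_nbij' (fun a => d - a) (fun a => d - a)
    (fun a ha => ?_) (fun a ha => ?_) (fun a ha => ?_) (fun a ha => ?_) (fun a ha => ?_) <;>
    simp only [Finset.mem_Ioo] at *
  · omega
  · omega
  · omega
  · omega
  · congr 1; omega

lemma fact_id (a b : ℕ) (ha : 1 ≤ a) (hb : 1 ≤ b) :
    (3*a).factorial * (3*b).factorial * ((3*(a+b)-4).choose (3*a-2))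
      = (3*a) * (3*a-1) * (3*b) * (3*b-1) * (3*(a+b)-4).factorial := by
  obtain ⟨a₁, rfl⟩ : ∃ a₁, a = a₁ + 1 := ⟨a - 1, by omega⟩
  obtain ⟨b₁, rfl⟩ : ∃ b₁, b = b₁ + 1 := ⟨b - 1, by omega⟩
  have e1 : 3*(a₁+1) = 3*a₁+3 := by omega
  have e2 : 3*(b₁+1) = 3*b₁+3 := by omega
  have e3 : 3*((a₁+1)+(b₁+1)) - 4 = 3*a₁+3*b₁+2 := by omega
  have e4 : 3*(a₁+1) - 2 = 3*a₁+1 := by omega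
  have e5 : 3*(a₁+1) - 1 = 3*a₁+2 := by omega
  have e6 : 3*(b₁+1) - 1 = 3*b₁+2 := by omega
  rw [e3, e4, e5, e6, e1, e2]
  set m := 3*a₁+3*b₁+2 with hm
  have hsym : m.choose (3*a₁+1) = m.choose (3*b₁+1) := by
    have h1 : m - (3*b₁+1) = 3*a₁+1 := by omega
    rw [← h1, Nat.choose_symm (by omega)]
  have h := Nat.add_choose_mul_factorial_mul_factorial (3*a₁+1) (3*b₁+1)
  have hs : 3*a₁+1 + (3*b₁+1) = m := by omega
  rw [hs] at h
  have f1 : (3*a₁+3).factorial = (3*a₁+3)*((3*a₁+2)*(3*a₁+1).factorial) := by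
    rw [show 3*a₁+3 = 3*a₁+2+1 by omega, Nat.factorial_succ,
        show 3*a₁+2 = 3*a₁+1+1 by omega, Nat.factorial_succ]
  have f2 : (3*b₁+3).factorial = (3*b₁+3)*((3*b₁+2)*(3*b₁+1).factorial) := by
    rw [show 3*b₁+3 = 3*b₁+2+1 by omega, Nat.factorial_succ,
        show 3*b₁+2 = 3*b₁+1+1 by omega, Nat.factorial_succ]
  rw [f1, f2, hsym]
  calc (3*a₁+3)*((3*a₁+2)*(3*a₁+1).factorial) * ((3*b₁+3)*((3*b₁+2)*(3*b₁+1).factorial))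
        * m.choose (3*b₁+1)
      = ((3*a₁+3)*(3*a₁+2)*(3*b₁+3)*(3*b₁+2))
          * (m.choose (3*b₁+1) * (3*a₁+1).factorial * (3*b₁+1).factorial) := by ring
  _ = ((3*a₁+3)*(3*a₁+2)*(3*b₁+3)*(3*b₁+2)) * m.factorial := by rw [h]
  _ = _ := by ring

lemma Ioo_eq_Ico (m : ℕ) : Finset.Ioo 0 m = Finset.Ico 1 m := by
  ext x; simp only [Finset.mem_Ioo, Finset.mem_Ico]; omega

lemma inv_cube_sum_aux : ∀ n : ℕ, 2 ≤ n →
    ∑ a ∈ Finset.Ioo 0 n, (1:ℝ)/(a:ℝ)^3 ≤ 2 - 1/((n:ℝ)-1) := by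
  intro n hn
  induction n, hn using Nat.le_induction with
  | base =>
    rw [show Finset.Ioo 0 2 = {1} by decide]
    norm_num
  | succ n hn ih =>
    rw [Ioo_eq_Ico, Finset.sum_Ico_succ_top (by omega), ← Ioo_eq_Ico]
    have hn1 : (2:ℝ) ≤ (n:ℝ) := by exact_mod_cast hn
    have key : (1:ℝ)/(n:ℝ)^3 ≤ 1/((n:ℝ)-1) - 1/(n:ℝ) := by
      rw [div_sub_div _ _ (by linarith) (by linarith)]
      rw [div_le_div_iff₀ (by positivity) (by nlinarith)]
      nlinarith [mul_nonneg (mul_nonneg (by linarith : (0:ℝ) ≤ (n:ℝ))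
        (by linarith : (0:ℝ) ≤ (n:ℝ))) (by linarith : (0:ℝ) ≤ (n:ℝ)-1)]
    have : ((n:ℝ)+1) - 1 = (n:ℝ) := by ring
    push_cast
    rw [this]
    linarith [ih]

lemma inv_cube_sum (n : ℕ) : ∑ a ∈ Finset.Ioo 0 n, (1:ℝ)/(a:ℝ)^3 ≤ 2 := by
  rcases le_or_gt 2 n with h | h
  · have := inv_cube_sum_aux n h
    have hn1 : (1:ℝ) ≤ (n:ℝ) - 1 := by
      have : (2:ℝ) ≤ (n:ℝ) := by exact_mod_cast h
      linarith
    have : (0:ℝ) < 1/((n:ℝ)-1) := by positivity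
    linarith
  · have he : Finset.Ioo 0 n = ∅ := by
      ext x; simp only [Finset.mem_Ioo, Finset.notMem_empty, iff_false]; omega
    rw [he]
    norm_num

lemma sum_inv3 (d : ℕ) (hd : 2 ≤ d) :
    ∑ a ∈ Finset.Ioo 0 d, (1:ℝ)/((a:ℝ)^3*((d-a:ℕ):ℝ)^3) ≤ 32/(d:ℝ)^3 := by
  have hterm : ∀ a ∈ Finset.Ioo 0 d,
      (1:ℝ)/((a:ℝ)^3*((d-a:ℕ):ℝ)^3) ≤ 8/((d:ℝ)^3*(a:ℝ)^3) + 8/((d:ℝ)^3*((d-a:ℕ):ℝ)^3) := by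
    intro a ha
    simp only [Finset.mem_Ioo] at ha
    have hA : (1:ℝ) ≤ (a:ℝ) := by exact_mod_cast ha.1
    have hB : (1:ℝ) ≤ ((d-a:ℕ):ℝ) := by
      have : 1 ≤ d - a := by omega
      exact_mod_cast this
    have hD : (2:ℝ) ≤ (d:ℝ) := by exact_mod_cast hd
    rcases le_or_gt (2*a) d with h | h
    · -- b ≥ d/2
      have hBd : (d:ℝ) ≤ 2*((d-a:ℕ):ℝ) := by
        have : d ≤ 2*(d-a) := by omega
        exact_mod_cast this
      have h1 : (1:ℝ)/((a:ℝ)^3*((d-a:ℕ):ℝ)^3) ≤ 8/((d:ℝ)^3*(a:ℝ)^3) := by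
        rw [div_le_div_iff₀ (by positivity) (by positivity)]
        nlinarith [pow_le_pow_left₀ (by linarith : (0:ℝ) ≤ (d:ℝ)) hBd 3,
          pow_pos (by linarith : (0:ℝ) < (a:ℝ)) 3]
      have h2 : (0:ℝ) ≤ 8/((d:ℝ)^3*((d-a:ℕ):ℝ)^3) := by positivity
      linarith
    · have hAd : (d:ℝ) ≤ 2*(a:ℝ) := by
        have : d ≤ 2*a := by omega
        exact_mod_cast this
      have h1 : (1:ℝ)/((a:ℝ)^3*((d-a:ℕ):ℝ)^3) ≤ 8/((d:ℝ)^3*((d-a:ℕ):ℝ)^3) := by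
        rw [div_le_div_iff₀ (by positivity) (by positivity)]
        nlinarith [pow_le_pow_left₀ (by linarith : (0:ℝ) ≤ (d:ℝ)) hAd 3,
          pow_pos (by linarith : (0:ℝ) < ((d-a:ℕ):ℝ)) 3]
      have h2 : (0:ℝ) ≤ 8/((d:ℝ)^3*(a:ℝ)^3) := by positivity
      linarith
  calc ∑ a ∈ Finset.Ioo 0 d, (1:ℝ)/((a:ℝ)^3*((d-a:ℕ):ℝ)^3)
      ≤ ∑ a ∈ Finset.Ioo 0 d, (8/((d:ℝ)^3*(a:ℝ)^3) + 8/((d:ℝ)^3*((d-a:ℕ):ℝ)^3)) :=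
        Finset.sum_le_sum hterm
  _ = (∑ a ∈ Finset.Ioo 0 d, 8/((d:ℝ)^3*(a:ℝ)^3))
      + ∑ a ∈ Finset.Ioo 0 d, 8/((d:ℝ)^3*((d-a:ℕ):ℝ)^3) := Finset.sum_add_distrib
  _ = (∑ a ∈ Finset.Ioo 0 d, 8/((d:ℝ)^3*(a:ℝ)^3))
      + ∑ a ∈ Finset.Ioo 0 d, 8/((d:ℝ)^3*(a:ℝ)^3) := by
        congr 1
        rw [sum_rev'' d (fun a => 8/((d:ℝ)^3*(a:ℝ)^3))]
  _ = 2 * ∑ a ∈ Finset.Ioo 0 d, 8/((d:ℝ)^3*(a:ℝ)^3) := by ring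
  _ = (16/(d:ℝ)^3) * ∑ a ∈ Finset.Ioo 0 d, (1:ℝ)/(a:ℝ)^3 := by
        rw [Finset.mul_sum, Finset.mul_sum]
        apply Finset.sum_congr rfl
        intro a _
        field_simp
        ring
  _ ≤ (16/(d:ℝ)^3) * 2 := by
        apply mul_le_mul_of_nonneg_left (inv_cube_sum d) (by positivity)
  _ = 32/(d:ℝ)^3 := by ring

section KK
variable (K : ℕ → ℤ) (hK1 : K 1 = 1)
  (hKrec : ∀ d : ℕ, 2 ≤ d →
      K d = ∑ d₁ ∈ Finset.Ioo 0 d,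
        K d₁ * K (d - d₁) *
          ((d₁ : ℤ)^2 * ((d - d₁ : ℕ) : ℤ)^2 * (Nat.choose (3*d - 4) (3*d₁ - 2) : ℤ)
            - (d₁ : ℤ)^3 * ((d - d₁ : ℕ) : ℤ) * (Nat.choose (3*d - 4) (3*d₁ - 1) : ℤ)))

include hKrec in
lemma two_K (d : ℕ) (hd : 2 ≤ d) :
    2 * K d = ∑ a ∈ Finset.Ioo 0 d,
      K a * K (d - a) * ((a:ℤ) * ((d - a : ℕ):ℤ)) * Br d a := by
  have h := hKrec d hd
  -- reversed version of the recursion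
  have h2 : K d = ∑ a ∈ Finset.Ioo 0 d,
      K (d - a) * K a *
        ((((d-a:ℕ)) : ℤ)^2 * ((a:ℕ) : ℤ)^2 * (Nat.choose (3*d - 4) (3*a - 2) : ℤ)
          - (((d-a:ℕ)) : ℤ)^3 * ((a:ℕ) : ℤ) * (Nat.choose (3*d - 4) (3*a - 3) : ℤ)) := by
    rw [h, sum_rev' d]
    apply Finset.sum_congr rfl
    intro a ha
    simp only [Finset.mem_Ioo] at ha
    have e1 : d - (d - a) = a := by omega
    rw [e1]
    have e2 : 3*(d-a) - 2 = (3*d-4) - (3*a - 2) := by omega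
    have e3 : 3*(d-a) - 1 = (3*d-4) - (3*a - 3) := by omega
    rw [e2, e3, Nat.choose_symm (by omega), Nat.choose_symm (by omega)]
  have := congrArg₂ (· + ·) h h2
  rw [← Finset.sum_add_distrib] at this
  calc 2 * K d = K d + K d := by ring
  _ = _ := by
    rw [this]
    apply Finset.sum_congr rfl
    intro a ha
    simp only [Finset.mem_Ioo] at ha
    rw [Br]
    ring

include hK1 hKrec in
lemma K_one_le : ∀ n, 1 ≤ n → 1 ≤ K n := by
  intro n
  induction n using Nat.strong_induction_on with
  | _ n ih =>
    intro hn
    rcases eq_or_lt_of_le hn with h1 | h2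
    · rw [← h1, hK1]
    have h := two_K K hKrec n h2
    have hterm : ∀ a ∈ Finset.Ioo 0 n,
        (1:ℤ) ≤ K a * K (n - a) * ((a:ℤ) * ((n - a : ℕ):ℤ)) * Br n a := by
      intro a ha
      simp only [Finset.mem_Ioo] at ha
      have hKa : 1 ≤ K a := ih a (by omega) (by omega)
      have hKb : 1 ≤ K (n - a) := ih (n - a) (by omega) (by omega)
      have hBr : 1 ≤ Br n a := Br_pos n a h2 ha.1 ha.2
      have ha1 : (1:ℤ) ≤ (a:ℤ) := by exact_mod_cast ha.1
      have hb1 : (1:ℤ) ≤ ((n-a:ℕ):ℤ) := by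
        have : 1 ≤ n - a := by omega
        exact_mod_cast this
      have hab : (1:ℤ) ≤ (a:ℤ) * ((n-a:ℕ):ℤ) := by nlinarith
      calc (1:ℤ) = 1*1*1*1 := by ring
      _ ≤ K a * K (n - a) * ((a:ℤ) * ((n - a : ℕ):ℤ)) * Br n a := by gcongr <;> linarith
    have hsum : (1:ℤ) ≤ ∑ a ∈ Finset.Ioo 0 n,
        K a * K (n - a) * ((a:ℤ) * ((n - a : ℕ):ℤ)) * Br n a := by
      have h1 : (1:ℤ) ≤ K 1 * K (n - 1) * ((1:ℤ) * ((n - 1 : ℕ):ℤ)) * Br n 1 := by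
        apply hterm; simp only [Finset.mem_Ioo]; omega
      have := Finset.single_le_sum (f := fun a =>
          K a * K (n - a) * ((a:ℤ) * ((n - a : ℕ):ℤ)) * Br n a)
        (fun i hi => le_trans zero_le_one (hterm i hi))
        (show (1:ℕ) ∈ Finset.Ioo 0 n by simp only [Finset.mem_Ioo]; omega)
      push_cast at this ⊢
      linarith
    rw [← h] at hsum
    by_contra hc
    push_neg at hc
    have : K n ≤ 0 := by omega
    linarith

include hK1 hKrec in
lemma lower_rec (d : ℕ) (hd : 2 ≤ d) :
    K (d-1) * ((d:ℤ) - 1) * ((d:ℤ)^2 + 3*(d:ℤ) - 6) ≤ 4 * K d := by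
  have h := two_K K hKrec d hd
  have hterm : ∀ a ∈ Finset.Ioo 0 d,
      (0:ℤ) ≤ K a * K (d - a) * ((a:ℤ) * ((d - a : ℕ):ℤ)) * Br d a := by
    intro a ha
    simp only [Finset.mem_Ioo] at ha
    have hKa : 1 ≤ K a := K_one_le K hK1 hKrec a (by omega)
    have hKb : 1 ≤ K (d - a) := K_one_le K hK1 hKrec (d - a) (by omega)
    have hBr : 1 ≤ Br d a := Br_pos d a hd ha.1 ha.2
    have ha1 : (0:ℤ) ≤ (a:ℤ) := by positivity
    have hb1 : (0:ℤ) ≤ ((d-a:ℕ):ℤ) := by positivity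
    have := mul_nonneg (mul_nonneg (mul_nonneg
      (by linarith : (0:ℤ) ≤ K a) (by linarith : (0:ℤ) ≤ K (d-a)))
      (mul_nonneg ha1 hb1)) (by linarith : (0:ℤ) ≤ Br d a)
    linarith [this]
  have hsingle := Finset.single_le_sum (f := fun a =>
      K a * K (d - a) * ((a:ℤ) * ((d - a : ℕ):ℤ)) * Br d a)
    hterm (show (1:ℕ) ∈ Finset.Ioo 0 d by simp only [Finset.mem_Ioo]; omega)
  rw [← h] at hsingle
  simp only [hK1, Nat.cast_one, one_mul] at hsingle
  -- hsingle : K (d-1) * ((d-1:ℕ):ℤ) * Br d 1 ≤ 2 * K d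
  have h2B := two_Br_one d hd
  have e6 : ((d-1:ℕ):ℤ) = (d:ℤ) - 1 := by
    push_cast [Nat.cast_sub (by omega : 1 ≤ d)]; ring
  rw [e6] at hsingle
  calc K (d-1) * ((d:ℤ) - 1) * ((d:ℤ)^2 + 3*(d:ℤ) - 6)
      = 2 * (K (d-1) * (((d:ℤ) - 1)) * Br d 1) := by rw [← h2B]; ring
  _ ≤ 2 * (2 * K d) := by linarith
  _ = 4 * K d := by ring

include hK1 hKrec in
lemma K_lb : ∀ n : ℕ, 1 ≤ n → ((n.factorial : ℝ))^3 / 8^n ≤ (K n : ℝ) := by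
  intro n hn
  induction n, hn using Nat.le_induction with
  | base => simp [hK1, Nat.factorial]; norm_num
  | succ n hn ih =>
    have ihn := ih
    have hrec := lower_rec K hK1 hKrec (n+1) (by omega)
    simp only [Nat.add_sub_cancel] at hrec
    have hrec' : (K n : ℝ) * ((n:ℝ) + 1 - 1) * (((n:ℝ)+1)^2 + 3*((n:ℝ)+1) - 6) ≤ 4 * (K (n+1) : ℝ) := by
      exact_mod_cast hrec
    have hKn : (0:ℝ) ≤ (K n : ℝ) := by
      have := K_one_le K hK1 hKrec n hn
      exact_mod_cast by linarith [this]
    have hn1 : (1:ℝ) ≤ (n:ℝ) := by exact_mod_cast hn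
    have hq : (0:ℝ) ≤ (n:ℝ) * (((n:ℝ)+1)^2 + 3*((n:ℝ)+1) - 6) := by nlinarith
    have hfact : ((n+1).factorial : ℝ) = ((n:ℝ)+1) * (n.factorial : ℝ) := by
      rw [Nat.factorial_succ]; push_cast; ring
    rw [hfact]
    have hpow : (8:ℝ)^(n+1) = 8 * 8^n := by ring
    rw [hpow]
    have h8 : (0:ℝ) < (8:ℝ)^n := by positivity
    have hfp : (0:ℝ) < (n.factorial : ℝ) := by
      exact_mod_cast Nat.factorial_pos n
    -- enough: ((n+1) n!)³/(8·8^n) ≤ n * q /4 * (n!³/8^n) ≤ n*q/4 * K n ≤ K (n+1)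
    have key : (((n:ℝ)+1) * (n.factorial:ℝ))^3 / (8 * 8^n) ≤
        (n:ℝ) * (((n:ℝ)+1)^2 + 3*((n:ℝ)+1) - 6) / 4 * ((n.factorial:ℝ)^3 / 8^n) := by
      have e : (((n:ℝ)+1) * (n.factorial:ℝ))^3 / (8 * 8^n)
          = (((n:ℝ)+1)^3/8) * ((n.factorial:ℝ)^3 / 8^n) := by
        field_simp
      rw [e]
      apply mul_le_mul_of_nonneg_right _ (by positivity)
      rw [div_le_div_iff₀ (by norm_num) (by norm_num)]
      nlinarith [hn1]
    refine key.trans ?_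
    calc (n:ℝ) * (((n:ℝ)+1)^2 + 3*((n:ℝ)+1) - 6) / 4 * ((n.factorial:ℝ)^3 / 8^n)
        ≤ (n:ℝ) * (((n:ℝ)+1)^2 + 3*((n:ℝ)+1) - 6) / 4 * (K n : ℝ) := by
          apply mul_le_mul_of_nonneg_left ihn (by positivity)
      _ ≤ (K (n+1) : ℝ) := by nlinarith

include hK1 hKrec in
lemma K_two : K 2 = 1 := by
  rw [hKrec 2 (by norm_num), show Finset.Ioo 0 2 = {1} by decide]
  rw [Finset.sum_singleton]
  norm_num [hK1]

include hK1 hKrec in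
set_option maxHeartbeats 1000000 in
lemma K_ub : ∀ n : ℕ, 1 ≤ n →
    (K n : ℝ) ≤ 162^(n-1) * ((3*n).factorial : ℝ) / (n:ℝ)^6 := by
  intro n
  induction n using Nat.strong_induction_on with
  | _ d ih =>
    intro hd1
    rcases eq_or_lt_of_le hd1 with h1 | hd2
    · rw [← h1, hK1]
      norm_num [Nat.factorial]
    rcases eq_or_lt_of_le (show 2 ≤ d by omega) with h2 | hd3
    · rw [← h2, K_two K hK1 hKrec]
      norm_num [show (3*2).factorial = 720 by decide]
    -- main case : d ≥ 3
    have hd : 2 ≤ d := by omega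
    have hD2 : (2:ℝ) ≤ (d:ℝ) := by exact_mod_cast hd
    have h2K := two_K K hKrec d hd
    have h2KR : 2 * (K d : ℝ) = ∑ a ∈ Finset.Ioo 0 d,
        ((K a * K (d - a) * ((a:ℤ) * ((d - a : ℕ):ℤ)) * Br d a : ℤ) : ℝ) := by
      exact_mod_cast congrArg (Int.cast : ℤ → ℝ) h2K
    have hterm : ∀ a ∈ Finset.Ioo 0 d,
        ((K a * K (d - a) * ((a:ℤ) * ((d - a : ℕ):ℤ)) * Br d a : ℤ) : ℝ) ≤
          162^(d-1) * (d:ℝ) * (((3*d-4).factorial : ℕ) : ℝ)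
            * (1/((a:ℝ)^3*((d-a:ℕ):ℝ)^3)) := by
      intro a ha
      simp only [Finset.mem_Ioo] at ha
      have hb1 : 1 ≤ d - a := by omega
      have hA1 : (1:ℝ) ≤ (a:ℝ) := by exact_mod_cast ha.1
      have hB1 : (1:ℝ) ≤ ((d-a:ℕ):ℝ) := by exact_mod_cast hb1
      have hA0 : (0:ℝ) < (a:ℝ) := by linarith
      have hB0 : (0:ℝ) < ((d-a:ℕ):ℝ) := by linarith
      -- bounds on factors
      have hKa := ih a ha.2 ha.1
      have hKb := ih (d-a) (by omega) hb1
      have hKa0 : (0:ℝ) ≤ (K a : ℝ) := by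
        have := K_one_le K hK1 hKrec a ha.1
        exact_mod_cast by linarith [this]
      have hKb0 : (0:ℝ) ≤ (K (d-a) : ℝ) := by
        have := K_one_le K hK1 hKrec (d-a) hb1
        exact_mod_cast by linarith [this]
      have hBr0 : (0:ℝ) ≤ ((Br d a : ℤ) : ℝ) := by
        have := Br_pos d a hd ha.1 ha.2
        exact_mod_cast by linarith [this]
      have hBrle : ((Br d a : ℤ) : ℝ) ≤ 2*(d:ℝ)*(((3*d-4).choose (3*a-2) : ℕ) : ℝ) := by
        have := Br_le d a hd ha.1 ha.2
        exact_mod_cast this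
      -- push the integer product to real factors
      have hcast : ((K a * K (d - a) * ((a:ℤ) * ((d - a : ℕ):ℤ)) * Br d a : ℤ) : ℝ)
          = (K a : ℝ) * (K (d-a) : ℝ) * ((a:ℝ) * ((d-a:ℕ):ℝ)) * ((Br d a : ℤ) : ℝ) := by
        push_cast; ring
      rw [hcast]
      have step1 : (K a : ℝ) * (K (d-a) : ℝ) * ((a:ℝ) * ((d-a:ℕ):ℝ)) * ((Br d a : ℤ) : ℝ)
          ≤ (162^(a-1) * ((3*a).factorial : ℝ) / (a:ℝ)^6)
            * (162^((d-a)-1) * ((3*(d-a)).factorial : ℝ) / ((d-a:ℕ):ℝ)^6)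
            * ((a:ℝ) * ((d-a:ℕ):ℝ))
            * (2*(d:ℝ)*(((3*d-4).choose (3*a-2) : ℕ) : ℝ)) := by
        gcongr
      refine step1.trans ?_
      -- now a pure inequality about reals
      have hpow : (162:ℝ)^(a-1) * (162:ℝ)^((d-a)-1) = (162:ℝ)^(d-2) := by
        rw [← pow_add]
        congr 1
        omega
      have hfid : ((3*a).factorial : ℝ) * ((3*(d-a)).factorial : ℝ)
            * (((3*d-4).choose (3*a-2) : ℕ) : ℝ)
          = (3*(a:ℝ)) * (3*(a:ℝ)-1) * (3*((d-a:ℕ):ℝ)) * (3*((d-a:ℕ):ℝ)-1)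
            * (((3*d-4).factorial : ℕ) : ℝ) := by
        have h := fact_id a (d-a) ha.1 hb1
        have hab : a + (d - a) = d := by omega
        rw [hab] at h
        have := congrArg (Nat.cast : ℕ → ℝ) h
        push_cast [Nat.cast_sub (by omega : 1 ≤ 3*a), Nat.cast_sub (by omega : 1 ≤ 3*(d-a))] at this
        linarith [this]
      set A := (a:ℝ)
      set B := ((d-a:ℕ):ℝ)
      set C := (((3*d-4).choose (3*a-2) : ℕ) : ℝ) with hC
      set F := (((3*d-4).factorial : ℕ) : ℝ) with hF
      have hC0 : (0:ℝ) ≤ C := by positivity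
      have hF0 : (0:ℝ) < F := by
        rw [hF]
        exact_mod_cast Nat.factorial_pos _
      have e1 : (162:ℝ)^(a-1) * ((3*a).factorial : ℝ) / A^6
            * (162^((d-a)-1) * ((3*(d-a)).factorial : ℝ) / B^6)
            * (A * B) * (2*(d:ℝ)*C)
          = 162^(d-2) * (2*(d:ℝ)) *
              (((3*a).factorial : ℝ) * ((3*(d-a)).factorial : ℝ) * C) * (A*B) / (A^6*B^6) := by
        rw [← hpow]
        field_simp
      rw [e1, hfid]
      rw [div_le_iff₀ (by positivity)]
      have e2 : 162^(d-1) * (d:ℝ) * F * (1/(A^3*B^3)) * (A^6*B^6)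
          = 162^(d-2) * (162 * (d:ℝ) * F * (A^3*B^3)) := by
        have : (162:ℝ)^(d-1) = 162^(d-2) * 162 := by
          rw [← pow_succ]
          congr 1
          omega
        rw [this]
        field_simp
      rw [e2]
      have core : 2*(d:ℝ) * ((3*A)*(3*A-1)*(3*B)*(3*B-1)*F) * (A*B)
          ≤ 162 * (d:ℝ) * F * (A^3*B^3) := by
        have c1 : (3*A)*(3*A-1) ≤ 9*A^2 := by nlinarith
        have c2 : (3*B)*(3*B-1) ≤ 9*B^2 := by nlinarith
        have c3 : (3*A)*(3*A-1)*((3*B)*(3*B-1)) ≤ 81*(A^2*B^2) := by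
          have p1 : (0:ℝ) ≤ (3*A)*(3*A-1) := by nlinarith
          have p2 : (0:ℝ) ≤ (3*B)*(3*B-1) := by nlinarith
          calc (3*A)*(3*A-1)*((3*B)*(3*B-1)) ≤ (9*A^2)*((3*B)*(3*B-1)) :=
            mul_le_mul_of_nonneg_right c1 p2
          _ ≤ (9*A^2)*(9*B^2) := by
            apply mul_le_mul_of_nonneg_left c2 (by positivity)
          _ = 81*(A^2*B^2) := by ring
        have habAB : A^2*B^2*(A*B) ≤ A^3*B^3 := by nlinarith [mul_pos hA0 hB0]
        have hdF : (0:ℝ) ≤ 2*(d:ℝ)*F := by positivity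
        calc 2*(d:ℝ) * ((3*A)*(3*A-1)*(3*B)*(3*B-1)*F) * (A*B)
            = (2*(d:ℝ)*F) * ((3*A)*(3*A-1)*((3*B)*(3*B-1))) * (A*B) := by ring
        _ ≤ (2*(d:ℝ)*F) * (81*(A^2*B^2)) * (A*B) := by
            apply mul_le_mul_of_nonneg_right _ (by positivity)
            exact mul_le_mul_of_nonneg_left c3 hdF
        _ = 162*(d:ℝ)*F*(A^2*B^2*(A*B)) := by ring
        _ ≤ 162*(d:ℝ)*F*(A^3*B^3) := by
            apply mul_le_mul_of_nonneg_left habAB (by positivity)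
      calc 162^(d-2) * (2*(d:ℝ)) * ((3*A)*(3*A-1)*(3*B)*(3*B-1)*F) * (A*B)
          = 162^(d-2) * (2*(d:ℝ) * ((3*A)*(3*A-1)*(3*B)*(3*B-1)*F) * (A*B)) := by ring
      _ ≤ 162^(d-2) * (162 * (d:ℝ) * F * (A^3*B^3)) := by
          apply mul_le_mul_of_nonneg_left core (by positivity)
    -- sum up
    have hsum : 2 * (K d : ℝ) ≤ 162^(d-1) * (d:ℝ) * (((3*d-4).factorial : ℕ) : ℝ) * (32/(d:ℝ)^3) := by
      rw [h2KR]
      calc ∑ a ∈ Finset.Ioo 0 d, ((K a * K (d - a) * ((a:ℤ) * ((d - a : ℕ):ℤ)) * Br d a : ℤ) : ℝ)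
          ≤ ∑ a ∈ Finset.Ioo 0 d, 162^(d-1) * (d:ℝ) * (((3*d-4).factorial : ℕ) : ℝ)
              * (1/((a:ℝ)^3*((d-a:ℕ):ℝ)^3)) := Finset.sum_le_sum hterm
      _ = 162^(d-1) * (d:ℝ) * (((3*d-4).factorial : ℕ) : ℝ)
              * ∑ a ∈ Finset.Ioo 0 d, (1:ℝ)/((a:ℝ)^3*((d-a:ℕ):ℝ)^3) := by
          rw [Finset.mul_sum]
      _ ≤ _ := by
          apply mul_le_mul_of_nonneg_left (sum_inv3 d hd) (by positivity)
    -- final comparison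
    have hfac : ((3*d).factorial : ℝ)
        = (3*(d:ℝ))*(3*(d:ℝ)-1)*(3*(d:ℝ)-2)*(3*(d:ℝ)-3)*(((3*d-4).factorial : ℕ) : ℝ) := by
      obtain ⟨e, rfl⟩ : ∃ e, d = e + 2 := ⟨d - 2, by omega⟩
      have h1 : 3*(e+2) = 3*e+4+1+1 := by omega
      have h2 : 3*(e+2)-4 = 3*e+2 := by omega
      rw [h2, h1]
      rw [Nat.factorial_succ, Nat.factorial_succ,
        show 3*e+4 = 3*e+3+1 by omega, Nat.factorial_succ,
        show 3*e+3 = 3*e+2+1 by omega, Nat.factorial_succ]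
      push_cast
      ring
    have hd4 : 16*(d:ℝ)^4 ≤ (3*(d:ℝ))*(3*(d:ℝ)-1)*(3*(d:ℝ)-2)*(3*(d:ℝ)-3) := by
      nlinarith [sq_nonneg ((d:ℝ)-2), sq_nonneg (d:ℝ), mul_pos (by linarith : (0:ℝ) < (d:ℝ)) (by linarith : (0:ℝ) < (d:ℝ)-1)]
    have hF0 : (0:ℝ) < (((3*d-4).factorial : ℕ) : ℝ) := by exact_mod_cast Nat.factorial_pos _
    -- K d ≤ 16 * 162^(d-1) * F4 / d^2 ≤ 162^(d-1)*(3d)!/d^6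
    have step : (K d : ℝ) ≤ 16 * 162^(d-1) * (((3*d-4).factorial : ℕ) : ℝ) / (d:ℝ)^2 := by
      have e3 : 162^(d-1) * (d:ℝ) * (((3*d-4).factorial : ℕ) : ℝ) * (32/(d:ℝ)^3)
          = 2 * (16 * 162^(d-1) * (((3*d-4).factorial : ℕ) : ℝ) / (d:ℝ)^2) := by
        field_simp
        ring
      rw [e3] at hsum
      linarith
    refine step.trans ?_
    rw [hfac]
    rw [div_le_div_iff₀ (by positivity) (by positivity)]
    calc 16 * 162^(d-1) * (((3*d-4).factorial : ℕ) : ℝ) * (d:ℝ)^6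
        = (162^(d-1) * (((3*d-4).factorial : ℕ) : ℝ) * (d:ℝ)^2) * (16*(d:ℝ)^4) := by ring
    _ ≤ (162^(d-1) * (((3*d-4).factorial : ℕ) : ℝ) * (d:ℝ)^2)
          * ((3*(d:ℝ))*(3*(d:ℝ)-1)*(3*(d:ℝ)-2)*(3*(d:ℝ)-3)) := by
        apply mul_le_mul_of_nonneg_left hd4 (by positivity)
    _ = 162^(d-1) * ((3*(d:ℝ))*(3*(d:ℝ)-1)*(3*(d:ℝ)-2)*(3*(d:ℝ)-3)*(((3*d-4).factorial : ℕ) : ℝ))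
          * (d:ℝ)^2 := by ring

end KK

lemma pow_le_fact_exp : ∀ n : ℕ, 1 ≤ n → ((n:ℝ))^n ≤ (n.factorial : ℝ) * Real.exp n := by
  intro n hn
  induction n, hn using Nat.le_induction with
  | base =>
    simp only [Nat.cast_one, pow_one, Nat.factorial_one, one_mul]
    nlinarith [Real.add_one_le_exp (1:ℝ)]
  | succ n hn ih =>
    have hn0 : (0:ℝ) < (n:ℝ) := by exact_mod_cast hn
    have hgoal : (((n+1:ℕ)):ℝ) = (n:ℝ)+1 := by push_cast; ring
    rw [hgoal]
    have key : ((n:ℝ)+1)^n ≤ (n:ℝ)^n * Real.exp 1 := by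
      have h1 : ((n:ℝ)+1) = (n:ℝ) * (1 + 1/(n:ℝ)) := by field_simp
      rw [h1, mul_pow]
      apply mul_le_mul_of_nonneg_left _ (by positivity)
      have h2 : (1 + 1/(n:ℝ)) ≤ Real.exp (1/(n:ℝ)) := by
        have := Real.add_one_le_exp (1/(n:ℝ)); linarith
      calc (1+1/(n:ℝ))^n ≤ (Real.exp (1/(n:ℝ)))^n := by
            apply pow_le_pow_left₀ (by positivity) h2
      _ = Real.exp ((n:ℕ)*(1/(n:ℝ))) := by rw [Real.exp_nat_mul]
      _ = Real.exp 1 := by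
            congr 1
            field_simp
    have hfact : ((n+1).factorial : ℝ) = ((n:ℝ)+1) * (n.factorial : ℝ) := by
      rw [Nat.factorial_succ]; push_cast; ring
    have hexp : Real.exp ((n:ℕ)+1) = Real.exp n * Real.exp 1 := by
      rw [← Real.exp_add]
    calc ((n:ℝ)+1)^(n+1) = ((n:ℝ)+1) * ((n:ℝ)+1)^n := by ring
    _ ≤ ((n:ℝ)+1) * ((n:ℝ)^n * Real.exp 1) := by
        apply mul_le_mul_of_nonneg_left key (by positivity)
    _ ≤ ((n:ℝ)+1) * (((n.factorial : ℝ) * Real.exp n) * Real.exp 1) := by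
        apply mul_le_mul_of_nonneg_left _ (by positivity)
        apply mul_le_mul_of_nonneg_right ih (le_of_lt (Real.exp_pos 1))
    _ = (((n+1).factorial : ℝ)) * (Real.exp n * Real.exp 1) := by rw [hfact]; ring
    _ = (((n+1).factorial : ℝ)) * Real.exp ((n:ℕ)+1) := by rw [hexp]

lemma log_fact_lb (n : ℕ) (hn : 1 ≤ n) :
    (n:ℝ) * Real.log n - n ≤ Real.log (n.factorial : ℝ) := by
  have hn0 : (0:ℝ) < (n:ℝ) := by exact_mod_cast hn
  have hf0 : (0:ℝ) < (n.factorial : ℝ) := by exact_mod_cast Nat.factorial_pos n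
  have h := pow_le_fact_exp n hn
  have hlog := Real.log_le_log (by positivity) h
  rw [Real.log_pow, Real.log_mul (ne_of_gt hf0) (ne_of_gt (Real.exp_pos _)), Real.log_exp] at hlog
  linarith

lemma log_fact_ub (n : ℕ) (hn : 1 ≤ n) :
    Real.log (n.factorial : ℝ) ≤ (n:ℝ) * Real.log n := by
  have hn0 : (0:ℝ) < (n:ℝ) := by exact_mod_cast hn
  have h : (n.factorial : ℝ) ≤ (n:ℝ)^n := by exact_mod_cast Nat.factorial_le_pow n
  have := Real.log_le_log (by exact_mod_cast Nat.factorial_pos n) h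
  rwa [Real.log_pow] at this




/-- If `K : ℕ → ℤ` is the sequence of Kontsevich numbers, then there
is a constant `C > 0` with `|log (K n) - 3 n log n| ≤ C n` for all `n ≥ 1`, i.e.
`log (K n) = 3 n log n + O(n)`. -/
theorem kontsevich_log_asymptotics
    (K : ℕ → ℤ)
    (hK1 : K 1 = 1)
    (hKrec : ∀ d : ℕ, 2 ≤ d →
      K d = ∑ d₁ ∈ Finset.Ioo 0 d,
        K d₁ * K (d - d₁) *
          ((d₁ : ℤ)^2 * ((d - d₁ : ℕ) : ℤ)^2 * (Nat.choose (3*d - 4) (3*d₁ - 2) : ℤ)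
            - (d₁ : ℤ)^3 * ((d - d₁ : ℕ) : ℤ) * (Nat.choose (3*d - 4) (3*d₁ - 1) : ℤ))) :
    ∃ C : ℝ, 0 < C ∧ ∀ n : ℕ, 1 ≤ n →
      |Real.log (K n) - 3 * n * Real.log n| ≤ C * n := by
  refine ⟨Real.log 162 + 3*Real.log 3 + 6, ?_, ?_⟩
  · have h1 : 0 < Real.log 162 := Real.log_pos (by norm_num)
    have h2 : 0 < Real.log 3 := Real.log_pos (by norm_num)
    linarith
  intro n hn
  have hn0 : (0:ℝ) < (n:ℝ) := by exact_mod_cast hn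
  have hn1 : (1:ℝ) ≤ (n:ℝ) := by exact_mod_cast hn
  have hKpos : (1:ℝ) ≤ (K n : ℝ) := by exact_mod_cast K_one_le K hK1 hKrec n hn
  have hK0 : (0:ℝ) < (K n : ℝ) := by linarith
  have hub := K_ub K hK1 hKrec n hn
  have hlb := K_lb K hK1 hKrec n hn
  have hf0 : (0:ℝ) < (n.factorial : ℝ) := by exact_mod_cast Nat.factorial_pos n
  have h3f0 : (0:ℝ) < ((3*n).factorial : ℝ) := by exact_mod_cast Nat.factorial_pos (3*n)
  -- upper bound on log K n
  have hub2 : (K n : ℝ) ≤ 162^n * ((3*n:ℕ):ℝ)^(3*n) := by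
    refine hub.trans ?_
    have e1 : (162:ℝ)^(n-1) * ((3*n).factorial : ℝ) / (n:ℝ)^6
        ≤ (162:ℝ)^(n-1) * ((3*n).factorial : ℝ) := by
      apply div_le_self (by positivity)
      exact one_le_pow₀ hn1
    refine e1.trans ?_
    have e2 : (162:ℝ)^(n-1) ≤ (162:ℝ)^n := by
      apply pow_le_pow_right₀ (by norm_num)
      omega
    have e3 : ((3*n).factorial : ℝ) ≤ ((3*n:ℕ):ℝ)^(3*n) := by
      exact_mod_cast Nat.factorial_le_pow (3*n)
    calc (162:ℝ)^(n-1) * ((3*n).factorial : ℝ) ≤ (162:ℝ)^n * ((3*n).factorial : ℝ) := by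
          apply mul_le_mul_of_nonneg_right e2 (by positivity)
    _ ≤ 162^n * ((3*n:ℕ):ℝ)^(3*n) := by
          apply mul_le_mul_of_nonneg_left e3 (by positivity)
  have hlog_ub : Real.log (K n : ℝ) ≤ (n:ℝ) * Real.log 162 + 3*(n:ℝ)*(Real.log 3 + Real.log n) := by
    have h := Real.log_le_log hK0 hub2
    rw [Real.log_mul (by positivity) (by positivity), Real.log_pow, Real.log_pow] at h
    have e4 : Real.log ((3*n:ℕ):ℝ) = Real.log 3 + Real.log n := by
      push_cast
      rw [Real.log_mul (by norm_num) (ne_of_gt hn0)]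
    rw [e4] at h
    push_cast at h
    linarith
  -- lower bound on log K n
  have hlog_lb : 3*((n:ℝ) * Real.log n - n) - 3*(n:ℝ)*Real.log 2 ≤ Real.log (K n : ℝ) := by
    have h := Real.log_le_log (by positivity) hlb
    rw [Real.log_div (by positivity) (by positivity), Real.log_pow, Real.log_pow] at h
    have hl8 : Real.log (8:ℝ) = 3 * Real.log 2 := by
      rw [show (8:ℝ) = 2^3 by norm_num, Real.log_pow]
      push_cast; ring
    rw [hl8] at h
    push_cast at h
    have hlf := log_fact_lb n hn
    linarith [h, hlf]
  -- combine
  have hlog2 : Real.log (2:ℝ) ≤ 1 := by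
    have := Real.log_le_sub_one_of_pos (by norm_num : (0:ℝ) < 2)
    linarith
  have hlog162 : (0:ℝ) ≤ Real.log 162 := Real.log_nonneg (by norm_num)
  have hlog3 : (0:ℝ) ≤ Real.log 3 := Real.log_nonneg (by norm_num)
  have hlog2' : (0:ℝ) ≤ Real.log 2 := Real.log_nonneg (by norm_num)
  rw [abs_le]
  constructor
  · have : 3 * (n:ℝ) * Real.log n - Real.log (K n : ℝ) ≤ 3*(n:ℝ) + 3*(n:ℝ)*Real.log 2 := by
      nlinarith [hlog_lb]
    nlinarith
  · have : Real.log (K n : ℝ) - 3 * (n:ℝ) * Real.log n ≤ (n:ℝ)*Real.log 162 + 3*(n:ℝ)*Real.log 3 := by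
      nlinarith [hlog_ub]
    nlinarith
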